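/- Under the hypotheses of the projection formula f(x) = f̂(x) − (ReLU(L_{f̂+gα}V(x) + W(x))/‖∇V(x)‖²)∇V(x), with V continuously differentiable, positive definite, radially unbounded, W continuous and positive definite, and the closed-loop vector field f + gα locally Lipschitz with f(0) + g(0)α(0) = 0, the origin of ẋ = f(x) + g(x)α(x) is globally asymptotically stable. -/

import Mathlib

open scoped RealInnerProductSpace
open Filter Set

private lemma decay_aux {v v' : ℝ → ℝ} {μ : ℝ}
    (hv : ∀ t ∈ Set.Ici (0:ℝ), HasDerivAt v (v' t) t)
    (hle : ∀ t ∈ Set.Ici (0:ℝ), v' t ≤ -μ) :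
    ∀ a ∈ Set.Ici (0:ℝ), ∀ b ∈ Set.Ici (0:ℝ), a ≤ b → v b + μ * b ≤ v a + μ * a := by
  have hg : ∀ t ∈ Set.Ici (0:ℝ), HasDerivAt (fun s => v s + μ * s) (v' t + μ) t := by
    intro t ht
    exact (hv t ht).add ((hasDerivAt_id t).const_mul μ |>.congr_deriv (by ring))
  have hA : AntitoneOn (fun s => v s + μ * s) (Set.Ici 0) := by
    apply antitoneOn_of_deriv_nonpos (convex_Ici 0)
    · exact fun t ht => (hg t ht).continuousAt.continuousWithinAt
    · intro t ht
      rw [interior_Ici] at ht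
      exact (hg t (Set.Ioi_subset_Ici_self ht)).differentiableAt.differentiableWithinAt
    · intro t ht
      rw [interior_Ici] at ht
      rw [(hg t (Set.Ioi_subset_Ici_self ht)).deriv]
      linarith [hle t (Set.Ioi_subset_Ici_self ht)]
  exact fun a ha b hb hab => hA ha hb hab

theorem learned_closed_loop_GAS {n m : ℕ}
    (V : EuclideanSpace ℝ (Fin n) → ℝ) (hV : ContDiff ℝ 1 V)
    (hV0 : V 0 = 0) (hVpos : ∀ x, x ≠ 0 → 0 < V x)
    (hVrad : Tendsto V (cocompact (EuclideanSpace ℝ (Fin n))) atTop)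
    (W : EuclideanSpace ℝ (Fin n) → ℝ) (hW : Continuous W)
    (hW0 : W 0 = 0) (hWpos : ∀ x, x ≠ 0 → 0 < W x)
    (fhat : EuclideanSpace ℝ (Fin n) → EuclideanSpace ℝ (Fin n))
    (α : EuclideanSpace ℝ (Fin n) → EuclideanSpace ℝ (Fin m))
    (g : EuclideanSpace ℝ (Fin n) → EuclideanSpace ℝ (Fin m) →L[ℝ] EuclideanSpace ℝ (Fin n))
    (hgrad : ∀ x, x ≠ 0 → gradient V x ≠ 0)
    (f : EuclideanSpace ℝ (Fin n) → EuclideanSpace ℝ (Fin n))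
    (hf : ∀ x, x ≠ 0 → f x = fhat x -
      (max (⟪gradient V x, fhat x + g x (α x)⟫ + W x) 0 / ‖gradient V x‖ ^ 2) • gradient V x)
    (F : EuclideanSpace ℝ (Fin n) → EuclideanSpace ℝ (Fin n))
    (hF : ∀ x, F x = f x + g x (α x))
    (hFlip : LocallyLipschitz F) (hF0 : F 0 = 0) :
    (∀ ε > (0 : ℝ), ∃ δ > (0 : ℝ), ∀ x : ℝ → EuclideanSpace ℝ (Fin n),
      (∀ t, 0 ≤ t → HasDerivAt x (F (x t)) t) → ‖x 0‖ < δ → ∀ t, 0 ≤ t → ‖x t‖ < ε) ∧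
    (∀ x : ℝ → EuclideanSpace ℝ (Fin n),
      (∀ t, 0 ≤ t → HasDerivAt x (F (x t)) t) → Tendsto x atTop (nhds 0)) := by
  classical
  have hWnn : ∀ y, 0 ≤ W y := by
    intro y
    rcases eq_or_ne y 0 with rfl | hy
    · exact hW0.ge
    · exact (hWpos y hy).le
  have hVnn : ∀ y, 0 ≤ V y := by
    intro y
    rcases eq_or_ne y 0 with rfl | hy
    · exact hV0.ge
    · exact (hVpos y hy).le
  have hVdiff : Differentiable ℝ V := hV.differentiable one_ne_zero
  have hVcont : Continuous V := hVdiff.continuous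
  -- key derivative inequality
  have hVd : ∀ y, ⟪gradient V y, F y⟫ ≤ -W y := by
    intro y
    rcases eq_or_ne y 0 with rfl | hy
    · simp [hF0, hW0]
    · rw [hF y, hf y hy]
      have hg0 : gradient V y ≠ 0 := hgrad y hy
      have hns : ‖gradient V y‖ ^ 2 ≠ 0 := pow_ne_zero 2 (norm_ne_zero_iff.mpr hg0)
      set a := ⟪gradient V y, fhat y + g y (α y)⟫ with ha
      have hrw : fhat y - (max (a + W y) 0 / ‖gradient V y‖ ^ 2) • gradient V y + g y (α y)
          = (fhat y + g y (α y)) - (max (a + W y) 0 / ‖gradient V y‖ ^ 2) • gradient V y := by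
        abel
      rw [hrw, inner_sub_right, real_inner_smul_right, real_inner_self_eq_norm_sq,
        div_mul_cancel₀ _ hns, ← ha]
      rcases le_total (a + W y) 0 with h | h
      · rw [max_eq_right h]; linarith
      · rw [max_eq_left h]; linarith
  -- chain rule
  have hchain : ∀ (x : ℝ → EuclideanSpace ℝ (Fin n)),
      (∀ t, 0 ≤ t → HasDerivAt x (F (x t)) t) →
      ∀ t ∈ Set.Ici (0:ℝ), HasDerivAt (fun s => V (x s)) ⟪gradient V (x t), F (x t)⟫ t := by
    intro x hx t ht
    have h1 := (hVdiff (x t)).hasGradientAt.hasFDerivAt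
    have h2 := h1.comp_hasDerivAt t (hx t ht)
    simp [InnerProductSpace.toDual_apply_apply] at h2 ⊢
    exact h2
  -- monotonicity of V along solutions
  have hmono : ∀ (x : ℝ → EuclideanSpace ℝ (Fin n)),
      (∀ t, 0 ≤ t → HasDerivAt x (F (x t)) t) →
      ∀ a b, 0 ≤ a → a ≤ b → V (x b) ≤ V (x a) := by
    intro x hx a b ha hab
    have := decay_aux (μ := 0) (hchain x hx)
      (fun t ht => by simpa using (hVd (x t)).trans (by simp [hWnn (x t)]))
      a (Set.mem_Ici.mpr ha) b (Set.mem_Ici.mpr (ha.trans hab)) hab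
    simpa using this
  constructor
  · -- stability
    intro ε hε
    rcases subsingleton_or_nontrivial (EuclideanSpace ℝ (Fin n)) with hsub | hnt
    · refine ⟨1, one_pos, fun x hx h0 t ht => ?_⟩
      have : x t = 0 := Subsingleton.elim _ _
      rw [this]
      simpa using hε
    · -- sphere of radius ε
      have hScomp : IsCompact (Metric.sphere (0 : EuclideanSpace ℝ (Fin n)) ε) :=
        isCompact_sphere 0 ε
      have hSne : (Metric.sphere (0 : EuclideanSpace ℝ (Fin n)) ε).Nonempty :=
        NormedSpace.sphere_nonempty.mpr hε.le
      obtain ⟨y₀, hy₀S, hy₀min⟩ := hScomp.exists_isMinOn hSne hVcont.continuousOn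
      have hy₀ : y₀ ≠ 0 := by
        intro h
        rw [h] at hy₀S
        simp at hy₀S
        linarith
      set M := V y₀ with hM
      have hMpos : 0 < M := hVpos y₀ hy₀
      -- small ball where V < M
      have hU : IsOpen (V ⁻¹' Set.Iio M) := isOpen_Iio.preimage hVcont
      have h0U : (0 : EuclideanSpace ℝ (Fin n)) ∈ V ⁻¹' Set.Iio M := by
        simp [hV0, hMpos]
      obtain ⟨δ, hδpos, hδ⟩ := Metric.isOpen_iff.mp hU 0 h0U
      refine ⟨min δ ε, lt_min hδpos hε, fun x hx h0 t ht => ?_⟩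
      by_contra hcon
      push_neg at hcon
      have h0ε : ‖x 0‖ < ε := lt_of_lt_of_le h0 (min_le_right _ _)
      have h0δ : ‖x 0‖ < δ := lt_of_lt_of_le h0 (min_le_left _ _)
      have hcont : ContinuousOn (fun s => ‖x s‖) (Set.Icc 0 t) := by
        intro s hs
        exact ((hx s hs.1).continuousAt.norm).continuousWithinAt
      have hIVT := intermediate_value_Icc ht hcont
      have hεmem : ε ∈ Set.Icc ‖x 0‖ ‖x t‖ := ⟨h0ε.le, hcon⟩
      obtain ⟨s, hs, hsε⟩ := hIVT hεmem
      have hxsS : x s ∈ Metric.sphere (0 : EuclideanSpace ℝ (Fin n)) ε := by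
        simp [hsε]
      have h1 : M ≤ V (x s) := hy₀min hxsS
      have h2 : V (x s) ≤ V (x 0) := hmono x hx 0 s le_rfl hs.1
      have h3 : V (x 0) < M := hδ (by simpa using h0δ)
      linarith
  · -- attractivity
    intro x hx
    set v : ℝ → ℝ := fun t => V (x t) with hv
    set c := V (x 0) with hc
    -- trajectory stays in compact sublevel set
    obtain ⟨K, hKcomp, hKsub⟩ := Filter.mem_cocompact.mp (hVrad (Filter.eventually_ge_atTop (c+1)))
    have hKc : {y : EuclideanSpace ℝ (Fin n) | V y ≤ c} ⊆ K := by
      intro y hy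
      by_contra hyK
      have := hKsub hyK
      simp only [Set.mem_preimage, Set.mem_setOf_eq] at this hy
      linarith
    have hK0comp : IsCompact {y : EuclideanSpace ℝ (Fin n) | V y ≤ c} :=
      hKcomp.of_isClosed_subset (isClosed_le hVcont continuous_const) hKc
    have hxK0 : ∀ t, 0 ≤ t → V (x t) ≤ c := fun t ht => hmono x hx 0 t le_rfl ht
    -- the infimum of v on [0, ∞)
    set l := sInf (v '' Set.Ici 0) with hl
    have hne : (v '' Set.Ici 0).Nonempty := ⟨v 0, 0, Set.self_mem_Ici, rfl⟩
    have hbdd : BddBelow (v '' Set.Ici 0) := ⟨0, fun y ⟨t, _, hty⟩ => hty ▸ hVnn (x t)⟩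
    have hlnn : 0 ≤ l := le_csInf hne fun y ⟨t, _, hty⟩ => hty ▸ hVnn (x t)
    have hlle : ∀ t, 0 ≤ t → l ≤ v t := fun t ht => csInf_le hbdd ⟨t, ht, rfl⟩
    have hl0 : l = 0 := by
      by_contra hlne
      have hlpos : 0 < l := lt_of_le_of_ne hlnn (Ne.symm hlne)
      set S := {y : EuclideanSpace ℝ (Fin n) | l ≤ V y ∧ V y ≤ c} with hS
      have hScomp : IsCompact S :=
        hK0comp.of_isClosed_subset
          ((isClosed_le continuous_const hVcont).inter (isClosed_le hVcont continuous_const))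
          (fun y hy => hy.2)
      have hSne : S.Nonempty := ⟨x 0, hlle 0 le_rfl, le_rfl⟩
      obtain ⟨z₀, hz₀S, hz₀min⟩ := hScomp.exists_isMinOn hSne hW.continuousOn
      have hz₀ : z₀ ≠ 0 := by
        intro h
        rw [h] at hz₀S
        have := hz₀S.1
        rw [hV0] at this
        linarith
      set μ := W z₀ with hμ
      have hμpos : 0 < μ := hWpos z₀ hz₀
      have hxS : ∀ t, 0 ≤ t → x t ∈ S := fun t ht => ⟨hlle t ht, hxK0 t ht⟩
      have hdec := decay_aux (μ := μ) (hchain x hx)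
        (fun t ht => (hVd (x t)).trans (by simpa using hz₀min (hxS t ht)))
      have hcl : l ≤ c := hlle 0 le_rfl
      set T := (c - l) / μ + 1 with hT
      have hTpos : 0 ≤ T := by
        rw [hT]
        have := div_nonneg (sub_nonneg.mpr hcl) hμpos.le
        linarith
      have h1 := hdec 0 Set.self_mem_Ici T (Set.mem_Ici.mpr hTpos) hTpos
      simp only [mul_zero, add_zero] at h1
      have h2 : l ≤ v T := hlle T hTpos
      have h3 : v T + μ * T ≤ c := by simpa using h1
      have h4 : μ * T = (c - l) + μ := by
        rw [hT, mul_add, mul_one, mul_div_cancel₀ _ (ne_of_gt hμpos)]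
      nlinarith
    -- now conclude x → 0
    rw [Metric.tendsto_atTop]
    intro ε hε
    set S' := {y : EuclideanSpace ℝ (Fin n) | V y ≤ c} ∩ {y | ε ≤ ‖y‖} with hS'
    have hS'comp : IsCompact S' :=
      hK0comp.of_isClosed_subset
        ((isClosed_le hVcont continuous_const).inter (isClosed_le continuous_const continuous_norm))
        (fun y hy => hy.1)
    rcases S'.eq_empty_or_nonempty with hS'e | hS'ne
    · refine ⟨0, fun t ht => ?_⟩
      have hxt : x t ∉ S' := hS'e ▸ Set.notMem_empty _
      have : ¬ ε ≤ ‖x t‖ := fun h => hxt ⟨hxK0 t ht, h⟩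
      rw [dist_zero_right]
      linarith [not_le.mp this]
    · obtain ⟨w₀, hw₀S, hw₀min⟩ := hS'comp.exists_isMinOn hS'ne hVcont.continuousOn
      have hw₀ : w₀ ≠ 0 := by
        intro h
        rw [h] at hw₀S
        have := hw₀S.2
        simp at this
        linarith
      have hmpos : 0 < V w₀ := hVpos w₀ hw₀
      -- find t₀ with v t₀ < V w₀
      have : sInf (v '' Set.Ici 0) < V w₀ := by rw [← hl, hl0]; exact hmpos
      obtain ⟨y, ⟨t₀, ht₀, rfl⟩, hyl⟩ := exists_lt_of_csInf_lt hne this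
      refine ⟨t₀, fun t htt₀ => ?_⟩
      have ht : 0 ≤ t := le_trans ht₀ htt₀
      have hvt : v t < V w₀ := lt_of_le_of_lt (hmono x hx t₀ t ht₀ htt₀) hyl
      have hxt : x t ∉ S' := fun h => absurd (hw₀min h) (not_le.mpr hvt)
      have : ¬ ε ≤ ‖x t‖ := fun h => hxt ⟨hxK0 t ht, h⟩
      rw [dist_zero_right]
      linarith [not_le.mp this]
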